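/- For a dyadic cube I_T ⊆ ℝ^n of side length L, fix an integer k ≥ 0 and consider the pairwise disjoint dyadic subcubes I_p ⊆ I_T of side length 2^{-k}L. Then ∑_p (dist((I_T)^c, I_p)/(2^{-k}L))^{-9n} ≤ C(n)·2^{k(n-1)}, where the sum is over those subcubes with dist((I_T)^c, I_p) > 0, and C(n) depends only on n. -/

import Mathlib

open MeasureTheory Metric
open scoped Classical

/-- The distance between two subsets of a metric space. -/
noncomputable def setDist {X : Type*} [PseudoMetricSpace X] (A B : Set X) : ℝ :=
  (⨅ x ∈ A, EMetric.infEdist x B).toReal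

lemma setDist_le_dist {X : Type*} [PseudoMetricSpace X] {A B : Set X} {x y : X}
    (hx : x ∈ A) (hy : y ∈ B) : setDist A B ≤ dist x y := by
  have h1 : (⨅ x ∈ A, EMetric.infEdist x B) ≤ edist x y :=
    le_trans (biInf_le _ hx) (EMetric.infEdist_le_edist_of_mem hy)
  calc setDist A B ≤ (edist x y).toReal := ENNReal.toReal_mono (edist_ne_top x y) h1
    _ = dist x y := (dist_edist x y).symm

lemma le_setDist {X : Type*} [PseudoMetricSpace X] {A B : Set X} {c : ℝ}
    (hA : A.Nonempty) (hB : B.Nonempty) (h : ∀ x ∈ A, ∀ y ∈ B, c ≤ dist x y) :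
    c ≤ setDist A B := by
  rcases le_or_gt c 0 with hc | hc
  · exact hc.trans ENNReal.toReal_nonneg
  obtain ⟨x₀, hx₀⟩ := hA
  have hne : (⨅ x ∈ A, EMetric.infEdist x B) ≠ ⊤ :=
    ne_top_of_le_ne_top (Metric.infEdist_ne_top hB) (biInf_le _ hx₀)
  have h2 : ENNReal.ofReal c ≤ ⨅ x ∈ A, EMetric.infEdist x B := by
    refine le_iInf₂ fun x hx => EMetric.le_infEdist.2 fun y hy => ?_
    rw [edist_dist]
    exact ENNReal.ofReal_le_ofReal (h x hx y hy)
  calc c = (ENNReal.ofReal c).toReal := (ENNReal.toReal_ofReal hc.le).symm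
    _ ≤ setDist A B := ENNReal.toReal_mono hne h2

lemma coord_le_dist {n : ℕ} (x y : EuclideanSpace ℝ (Fin n)) (j : Fin n) :
    |x j - y j| ≤ dist x y := by
  rw [EuclideanSpace.dist_eq]
  rw [← Real.sqrt_sq (abs_nonneg (x j - y j))]
  apply Real.sqrt_le_sqrt
  rw [sq_abs]
  have := Finset.single_le_sum (f := fun i => dist (x i) (y i) ^ 2)
    (fun i _ => sq_nonneg _) (Finset.mem_univ j)
  simpa [Real.dist_eq, sq_abs] using this

lemma dist_single_coord {n : ℕ} (x y : EuclideanSpace ℝ (Fin n)) (j : Fin n)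
    (h : ∀ i, i ≠ j → x i = y i) : dist x y = |x j - y j| := by
  rw [EuclideanSpace.dist_eq, Finset.sum_eq_single j]
  · rw [Real.dist_eq, Real.sqrt_sq_eq_abs, abs_abs]
  · intro i _ hij
    rw [Real.dist_eq, h i hij]
    simp
  · simp

lemma sum_coord {N n : ℕ} (j : Fin n) (g : Fin N → ℝ) :
    ∑ m : Fin n → Fin N, g (m j) = (N : ℝ) ^ (n - 1) * ∑ i, g i := by
  have h := Fintype.sum_equiv (Equiv.funSplitAt j (Fin N))
    (fun m => g (m j)) (fun p => g p.1) (fun m => rfl)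
  rw [h, Fintype.sum_prod_type]
  have hcard : Fintype.card ({ l : Fin n // l ≠ j } → Fin N) = N ^ (n - 1) := by
    rw [Fintype.card_fun, Fintype.card_fin]
    congr 1
    rw [Fintype.card_subtype_compl, Fintype.card_subtype_eq, Fintype.card_fin]
  calc ∑ a : Fin N, ∑ _b : { l : Fin n // l ≠ j } → Fin N, g a
      = ∑ a : Fin N, (N : ℝ) ^ (n - 1) * g a := by
        refine Finset.sum_congr rfl fun a _ => ?_
        rw [Finset.sum_const, Finset.card_univ, hcard, nsmul_eq_mul]
        push_cast
        ring
    _ = (N : ℝ) ^ (n - 1) * ∑ i, g i := by rw [Finset.mul_sum]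

noncomputable def Haux : ℕ → ℝ := fun i => if i = 0 then 0 else ((i : ℝ) ^ 2)⁻¹

lemma Haux_nonneg (i : ℕ) : 0 ≤ Haux i := by
  unfold Haux; split <;> positivity

lemma sum_Haux_le (N : ℕ) : ∑ i ∈ Finset.range N, Haux i ≤ 2 := by
  set G : ℕ → ℝ := fun i => 2 / max (i : ℝ) 1 with hG
  have hstep : ∀ i, Haux i ≤ G i - G (i + 1) := by
    intro i
    cases i with
    | zero => simp [Haux, hG]
    | succ j =>
      have h1 : (1:ℝ) ≤ (j:ℝ) + 1 := by
        have : (0:ℝ) ≤ (j:ℝ) := Nat.cast_nonneg j; linarith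
      have h2 : (1:ℝ) ≤ (j:ℝ) + 2 := by linarith
      have e1 : G (j+1) = 2 / ((j:ℝ)+1) := by simp only [hG]; push_cast; rw [max_eq_left h1]
      have e2 : G (j+2) = 2 / ((j:ℝ)+2) := by
        simp only [hG]; push_cast; rw [max_eq_left h2]
      simp only [Haux, Nat.succ_ne_zero, if_false]
      rw [e1]
      show (((j+1:ℕ):ℝ)^2)⁻¹ ≤ _
      rw [show ((j:ℕ)+1+1) = j+2 from rfl, e2]
      push_cast
      rw [div_sub_div _ _ (by positivity) (by positivity), inv_eq_one_div,
        div_le_div_iff₀ (by positivity) (by positivity)]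
      nlinarith [sq_nonneg ((j:ℝ))]
  calc ∑ i ∈ Finset.range N, Haux i ≤ ∑ i ∈ Finset.range N, (G i - G (i+1)) :=
        Finset.sum_le_sum fun i _ => hstep i
    _ = G 0 - G N := Finset.sum_range_sub' G N
    _ ≤ 2 := by
        have h0 : 0 ≤ G N := by positivity
        have h1 : G 0 ≤ 2 := by simp [hG]
        linarith

theorem main_bound (n k : ℕ) (hn : 1 ≤ n) (L s : ℝ) (hL : 0 < L)
    (a : EuclideanSpace ℝ (Fin n))
    (IT : Set (EuclideanSpace ℝ (Fin n)))
    (Ip : (Fin n → Fin (2 ^ k)) → Set (EuclideanSpace ℝ (Fin n)))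
    (hs : s = L / 2 ^ k)
    (hIT : IT = {x | ∀ j, x j ∈ Set.Ico (a j) (a j + L)})
    (hIp : Ip = fun m => {x | ∀ j, x j ∈ Set.Ico (a j + (m j : ℝ) * s)
      (a j + ((m j : ℝ) + 1) * s)}) :
    ∑ m ∈ Finset.univ.filter (fun m => 0 < setDist ITᶜ (Ip m)),
        (setDist ITᶜ (Ip m) / s) ^ (-(9 * n : ℝ))
      ≤ (4 * n : ℝ) * 2 ^ (k * (n - 1)) := by
  classical
  haveI : Nonempty (Fin n) := ⟨⟨0, hn⟩⟩
  have hspos : 0 < s := by rw [hs]; positivity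
  have hN1 : 1 ≤ 2 ^ k := Nat.one_le_two_pow
  have hNs : (2 : ℝ) ^ k * s = L := by rw [hs]; field_simp
  have hn' : (1:ℝ) ≤ (n:ℝ) := by exact_mod_cast hn
  -- corner point of each subcube
  have hcorner : ∀ m : Fin n → Fin (2 ^ k),
      (WithLp.toLp 2 (fun i => a i + (m i : ℝ) * s) : EuclideanSpace ℝ (Fin n)) ∈ Ip m := by
    intro m
    rw [hIp]
    simp only [Set.mem_setOf_eq, Set.mem_Ico]
    intro j
    refine ⟨le_refl _, ?_⟩
    show a j + (m j : ℝ) * s < a j + ((m j : ℝ) + 1) * s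
    nlinarith [hspos]
  -- complement of IT is nonempty
  have hITc : (ITᶜ).Nonempty := by
    refine ⟨WithLp.toLp 2 (fun i => a i - 1), ?_⟩
    rw [Set.mem_compl_iff, hIT]
    simp only [Set.mem_setOf_eq, Set.mem_Ico, not_forall, WithLp.ofLp_toLp]
    refine ⟨⟨0, hn⟩, fun hcon => ?_⟩
    linarith [hcon.1]
  -- subcubes touching the boundary have setDist zero
  have touching : ∀ (m : Fin n → Fin (2 ^ k)) (j : Fin n),
      ((m j : ℕ) = 0 ∨ (m j : ℕ) = 2 ^ k - 1) → ¬(0 < setDist ITᶜ (Ip m)) := by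
    intro m j hj hpos
    have hcIp := hcorner m
    set d := setDist ITᶜ (Ip m) with hd
    set δ := min d s / 2 with hδdef
    have hmin : 0 < min d s := lt_min hpos hspos
    have hδpos : 0 < δ := by rw [hδdef]; linarith
    have hδs : δ ≤ s := by
      have h1 : min d s ≤ s := min_le_right _ _
      rw [hδdef]; linarith
    have hδd : δ < d := by
      have h1 : min d s ≤ d := min_le_left _ _
      rw [hδdef]; linarith
    have hkey : d ≤ δ := by
      rcases hj with hj0 | hjN
      · -- touching the lower face in direction j
        set x : EuclideanSpace ℝ (Fin n) :=
          WithLp.toLp 2 (fun i => if i = j then a j - δ else a i + (m i : ℝ) * s) with hx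
        have hxj : x j = a j - δ := by simp [hx]
        have hxc : x ∈ ITᶜ := by
          rw [Set.mem_compl_iff, hIT]
          simp only [Set.mem_setOf_eq, Set.mem_Ico, not_forall]
          refine ⟨j, fun hcon => ?_⟩
          rw [hxj] at hcon
          linarith [hcon.1]
        have hmj : ((m j : ℕ) : ℝ) = 0 := by rw [hj0]; norm_num
        have hdist : dist x (WithLp.toLp 2 (fun i => a i + (m i : ℝ) * s) : EuclideanSpace ℝ (Fin n)) = δ := by
          rw [dist_single_coord _ _ j (fun i hij => by simp [hx, hij])]
          show |x j - (a j + (m j : ℝ) * s)| = δ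
          rw [hxj, hmj]
          rw [show a j - δ - (a j + 0 * s) = -δ by ring, abs_neg, abs_of_pos hδpos]
        calc d ≤ dist x (WithLp.toLp 2 (fun i => a i + (m i : ℝ) * s) : EuclideanSpace ℝ (Fin n)) :=
              setDist_le_dist hxc hcIp
          _ = δ := hdist
      · -- touching the upper face in direction j
        set x : EuclideanSpace ℝ (Fin n) :=
          WithLp.toLp 2 (fun i => if i = j then a j + L else a i + (m i : ℝ) * s) with hx
        set y : EuclideanSpace ℝ (Fin n) :=
          WithLp.toLp 2 (fun i => if i = j then a j + L - δ else a i + (m i : ℝ) * s) with hy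
        have hxj : x j = a j + L := by simp [hx]
        have hyj : y j = a j + L - δ := by simp [hy]
        have hxc : x ∈ ITᶜ := by
          rw [Set.mem_compl_iff, hIT]
          simp only [Set.mem_setOf_eq, Set.mem_Ico, not_forall]
          refine ⟨j, fun hcon => ?_⟩
          rw [hxj] at hcon
          exact lt_irrefl _ hcon.2
        have hmj : ((m j : ℕ) : ℝ) = (2:ℝ)^k - 1 := by
          have := congrArg (Nat.cast : ℕ → ℝ) hjN
          rw [Nat.cast_sub hN1] at this
          push_cast at this
          exact this
        have hyI : y ∈ Ip m := by
          rw [hIp]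
          simp only [Set.mem_setOf_eq, Set.mem_Ico]
          intro i
          by_cases hij : i = j
          · subst hij
            rw [hyj, hmj]
            have e1 : ((2:ℝ)^k - 1) * s = L - s := by rw [← hNs]; ring
            have e2 : (((2:ℝ)^k - 1) + 1) * s = L := by rw [← hNs]; ring
            constructor
            · rw [e1]; linarith
            · rw [e2]; linarith
          · have hyi : y i = a i + (m i : ℝ) * s := by simp [hy, hij]
            rw [hyi]
            refine ⟨le_refl _, ?_⟩
            nlinarith [hspos]
        have hdist : dist x y = δ := by
          rw [dist_single_coord _ _ j (fun i hij => by simp [hx, hy, hij])]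
          rw [hxj, hyj]
          rw [show a j + L - (a j + L - δ) = δ by ring, abs_of_pos hδpos]
        calc d ≤ dist x y := setDist_le_dist hxc hyI
          _ = δ := hdist
    linarith
  -- the per-term weight function
  set g : Fin (2 ^ k) → ℝ :=
    fun i => ((min (i : ℕ) (2 ^ k - 1 - (i : ℕ)) : ℕ) : ℝ) ^ (-(9 * n : ℝ)) with hg
  have hgnonneg : ∀ i, 0 ≤ g i := fun i => Real.rpow_nonneg (Nat.cast_nonneg _) _
  -- key estimate for each subcube in the filter
  have key : ∀ m ∈ Finset.univ.filter (fun m => 0 < setDist ITᶜ (Ip m)),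
      (setDist ITᶜ (Ip m) / s) ^ (-(9 * n : ℝ)) ≤ ∑ j, g (m j) := by
    intro m hm
    rw [Finset.mem_filter] at hm
    have hmpos := hm.2
    set u : Fin n → ℕ := fun j => min ((m j : ℕ)) (2 ^ k - 1 - (m j : ℕ)) with hu
    have hu1 : ∀ j, 1 ≤ u j := by
      intro j
      by_contra hcon
      push_neg at hcon
      have h0 : (m j : ℕ) = 0 ∨ 2 ^ k - 1 - (m j : ℕ) = 0 :=
        Nat.min_eq_zero_iff.mp (Nat.lt_one_iff.mp hcon)
      have hlt := (m j).isLt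
      exact touching m j (by omega) hmpos
    set t := Finset.univ.inf' Finset.univ_nonempty u with htdef
    have htu : ∀ j, t ≤ u j := fun j => Finset.inf'_le u (Finset.mem_univ j)
    have ht1 : 1 ≤ t := Finset.le_inf' _ _ (fun j _ => hu1 j)
    have hlb : (t : ℝ) * s ≤ setDist ITᶜ (Ip m) := by
      refine le_setDist hITc ⟨_, hcorner m⟩ ?_
      intro x hx y hy
      rw [Set.mem_compl_iff, hIT] at hx
      simp only [Set.mem_setOf_eq, Set.mem_Ico, not_forall, not_and_or, not_le, not_lt] at hx
      obtain ⟨j, hj⟩ := hx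
      rw [hIp] at hy
      simp only [Set.mem_setOf_eq, Set.mem_Ico] at hy
      have hcle : (t : ℝ) * s ≤ |x j - y j| := by
        rcases hj with hj | hj
        · -- x j < a j
          have h1 := (hy j).1
          have hcast : (t : ℝ) ≤ ((m j : ℕ) : ℝ) :=
            Nat.cast_le.2 (le_trans (htu j) (min_le_left _ _))
          have h2 : (t : ℝ) * s ≤ ((m j : ℕ) : ℝ) * s :=
            mul_le_mul_of_nonneg_right hcast hspos.le
          have h3 : (t : ℝ) * s ≤ y j - x j := by linarith
          calc (t : ℝ) * s ≤ y j - x j := h3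
            _ ≤ |y j - x j| := le_abs_self _
            _ = |x j - y j| := abs_sub_comm _ _
        · -- a j + L ≤ x j
          have h2 := (hy j).2
          have hmlt := (m j).isLt
          have hcast : (t : ℝ) ≤ (2:ℝ)^k - 1 - ((m j : ℕ) : ℝ) := by
            have h3 : t ≤ 2 ^ k - 1 - (m j : ℕ) := le_trans (htu j) (min_le_right _ _)
            have h4 := (Nat.cast_le (α := ℝ)).2 h3
            rw [Nat.cast_sub (by omega : (m j : ℕ) ≤ 2 ^ k - 1), Nat.cast_sub hN1] at h4
            push_cast at h4
            linarith
          have h5 : (t : ℝ) * s ≤ ((2:ℝ)^k - 1 - ((m j : ℕ) : ℝ)) * s :=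
            mul_le_mul_of_nonneg_right hcast hspos.le
          have h6 : ((2:ℝ)^k - 1 - ((m j : ℕ) : ℝ)) * s = L - s - ((m j : ℕ) : ℝ) * s := by
            rw [← hNs]; ring
          have h7 : (((m j : ℕ) : ℝ) + 1) * s = ((m j : ℕ) : ℝ) * s + s := by ring
          have h8 : (t : ℝ) * s ≤ x j - y j := by
            rw [h7] at h2
            linarith
          calc (t : ℝ) * s ≤ x j - y j := h8
            _ ≤ |x j - y j| := le_abs_self _
      exact le_trans hcle (coord_le_dist x y j)
    -- now conclude the rpow estimate
    have h9n : -(9 * (n:ℝ)) ≤ 0 := by linarith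
    have htR : (1:ℝ) ≤ (t : ℝ) := by exact_mod_cast ht1
    have hq : (t : ℝ) ≤ setDist ITᶜ (Ip m) / s := (le_div_iff₀ hspos).2 hlb
    have hstep1 : (setDist ITᶜ (Ip m) / s) ^ (-(9 * n : ℝ)) ≤ (t : ℝ) ^ (-(9 * n : ℝ)) :=
      Real.rpow_le_rpow_of_nonpos (by linarith) hq h9n
    obtain ⟨j0, _, hj0⟩ := Finset.exists_mem_eq_inf' (Finset.univ_nonempty) u
    have hstep2 : (t : ℝ) ^ (-(9 * n : ℝ)) = g (m j0) := by
      rw [hg, htdef, hj0]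
    calc (setDist ITᶜ (Ip m) / s) ^ (-(9 * n : ℝ)) ≤ (t : ℝ) ^ (-(9 * n : ℝ)) := hstep1
      _ = g (m j0) := hstep2
      _ ≤ ∑ j, g (m j) :=
        Finset.single_le_sum (fun j _ => hgnonneg (m j)) (Finset.mem_univ j0)
  -- bound the one-dimensional sum
  have hsumg : ∑ i, g i ≤ 4 := by
    have hgH : ∀ i : Fin (2 ^ k), g i ≤ Haux (i : ℕ) + Haux (2 ^ k - 1 - (i : ℕ)) := by
      intro i
      set u := min ((i : ℕ)) (2 ^ k - 1 - (i : ℕ)) with hudef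
      have h1 : g i ≤ Haux u := by
        rcases Nat.eq_zero_or_pos u with h0 | hpos
        · rw [hg]
          show ((u:ℕ):ℝ) ^ (-(9 * n : ℝ)) ≤ Haux u
          rw [h0]
          rw [show ((0:ℕ):ℝ) = (0:ℝ) by norm_num, Real.zero_rpow (by linarith)]
          simp [Haux]
        · have hbase : (1:ℝ) ≤ (u:ℝ) := by exact_mod_cast hpos
          have hne : u ≠ 0 := by omega
          calc g i = (u:ℝ) ^ (-(9 * n : ℝ)) := rfl
            _ ≤ (u:ℝ) ^ (-(2:ℝ)) :=
              Real.rpow_le_rpow_of_exponent_le hbase (by linarith)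
            _ = ((u:ℝ)^(2:ℕ))⁻¹ := by
              rw [show (-(2:ℝ)) = -((2:ℕ):ℝ) by norm_num,
                Real.rpow_neg (by linarith), Real.rpow_natCast]
            _ = Haux u := by simp [Haux, hne]
      have h2 : Haux u ≤ Haux (i : ℕ) + Haux (2 ^ k - 1 - (i : ℕ)) := by
        rcases min_cases ((i : ℕ)) (2 ^ k - 1 - (i : ℕ)) with ⟨he, _⟩ | ⟨he, _⟩ <;>
          rw [hudef, he]
        · linarith [Haux_nonneg (2 ^ k - 1 - (i : ℕ))]
        · linarith [Haux_nonneg (i : ℕ)]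
      exact le_trans h1 h2
    calc ∑ i, g i ≤ ∑ i : Fin (2 ^ k), (Haux (i : ℕ) + Haux (2 ^ k - 1 - (i : ℕ))) :=
          Finset.sum_le_sum fun i _ => hgH i
      _ = ∑ i ∈ Finset.range (2 ^ k), (Haux i + Haux (2 ^ k - 1 - i)) :=
          Fin.sum_univ_eq_sum_range (fun i => Haux i + Haux (2 ^ k - 1 - i)) (2 ^ k)
      _ = (∑ i ∈ Finset.range (2 ^ k), Haux i)
          + ∑ i ∈ Finset.range (2 ^ k), Haux (2 ^ k - 1 - i) := Finset.sum_add_distrib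
      _ = (∑ i ∈ Finset.range (2 ^ k), Haux i) + ∑ i ∈ Finset.range (2 ^ k), Haux i := by
          rw [Finset.sum_range_reflect]
      _ ≤ 2 + 2 := add_le_add (sum_Haux_le _) (sum_Haux_le _)
      _ = 4 := by norm_num
  -- put everything together
  have hpow : (((2 ^ k : ℕ) : ℝ)) ^ (n - 1) = (2:ℝ) ^ (k * (n - 1)) := by
    push_cast
    rw [← pow_mul]
  calc ∑ m ∈ Finset.univ.filter (fun m => 0 < setDist ITᶜ (Ip m)),
        (setDist ITᶜ (Ip m) / s) ^ (-(9 * n : ℝ))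
      ≤ ∑ m ∈ Finset.univ.filter (fun m => 0 < setDist ITᶜ (Ip m)), ∑ j, g (m j) :=
        Finset.sum_le_sum key
    _ ≤ ∑ m : Fin n → Fin (2 ^ k), ∑ j, g (m j) :=
        Finset.sum_le_sum_of_subset_of_nonneg (Finset.filter_subset _ _)
          (fun m _ _ => Finset.sum_nonneg fun j _ => hgnonneg (m j))
    _ = ∑ j : Fin n, ∑ m : Fin n → Fin (2 ^ k), g (m j) := Finset.sum_comm
    _ = ∑ _j : Fin n, (((2 ^ k : ℕ) : ℝ)) ^ (n - 1) * ∑ i, g i := by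
        exact Finset.sum_congr rfl fun j _ => sum_coord j g
    _ = (n : ℝ) * ((((2 ^ k : ℕ) : ℝ)) ^ (n - 1) * ∑ i, g i) := by
        rw [Finset.sum_const, Finset.card_univ, Fintype.card_fin, nsmul_eq_mul]
    _ ≤ (n : ℝ) * ((((2 ^ k : ℕ) : ℝ)) ^ (n - 1) * 4) := by
        have hA : (0:ℝ) ≤ (((2 ^ k : ℕ) : ℝ)) ^ (n - 1) := by positivity
        have hn0 : (0:ℝ) ≤ (n : ℝ) := by linarith
        exact mul_le_mul_of_nonneg_left (mul_le_mul_of_nonneg_left hsumg hA) hn0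
    _ = (4 * n : ℝ) * 2 ^ (k * (n - 1)) := by rw [hpow]; ring

/-- For a cube `I_T ⊆ ℝⁿ` of side `L` and an integer `k ≥ 0`, consider the `2^{kn}`
pairwise disjoint dyadic subcubes `I_p` of side `2^{-k}L`.  Then the sum of
`(dist((I_T)ᶜ, I_p)/(2^{-k}L))^{-9n}` over those subcubes not touching the boundary
(i.e. with `dist((I_T)ᶜ, I_p) > 0`) is at most `C(n)·2^{k(n-1)}`. -/
theorem sum_over_subcubes_bound (n : ℕ) (hn : 1 ≤ n) :
    ∃ C : ℝ, 0 < C ∧ ∀ (k : ℕ) (L : ℝ) (_ : 0 < L) (a : EuclideanSpace ℝ (Fin n)),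
      letI IT : Set (EuclideanSpace ℝ (Fin n)) :=
        {x | ∀ j, x j ∈ Set.Ico (a j) (a j + L)}
      letI s : ℝ := L / 2 ^ k
      letI Ip : (Fin n → Fin (2 ^ k)) → Set (EuclideanSpace ℝ (Fin n)) :=
        fun m => {x | ∀ j, x j ∈ Set.Ico (a j + (m j : ℝ) * s) (a j + ((m j : ℝ) + 1) * s)}
      ∑ m ∈ Finset.univ.filter (fun m => 0 < setDist ITᶜ (Ip m)),
          (setDist ITᶜ (Ip m) / s) ^ (-(9 * n : ℝ))
        ≤ C * 2 ^ (k * (n - 1)) := by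
  refine ⟨4 * n, ?_, ?_⟩
  · have h : (1:ℝ) ≤ (n:ℝ) := by exact_mod_cast hn
    linarith
  · intro k L hL a
    exact main_bound n k hn L (L / 2 ^ k) hL a _ _ rfl rfl rfl
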